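/- Four-point mixed difference bound for linear strongly monotone equations: let $U$ be a real Hilbert space, $\nu>0$, and let $A, A_\ell, \tilde{A}, \tilde{A}_\ell : U \to U$ be bounded self-adjoint positive semidefinite operators and $b, b_\ell, \tilde{b}, \tilde{b}_\ell \in U$. Let $u, u_\ell, \tilde{u}, \tilde{u}_\ell$ solve $(A+\nu I)u = b$, $(A_\ell+\nu I)u_\ell = b_\ell$, $(\tilde{A}+\nu I)\tilde{u} = \tilde{b}$, $(\tilde{A}_\ell+\nu I)\tilde{u}_\ell = \tilde{b}_\ell$, and suppose moreover $\tilde{A} = A$, $\tilde{A}_\ell = A_\ell$ (same operators, different data) with $b - b_\ell = \tilde{b} - \tilde{b}_\ell =: \delta$. Then $\Delta u := u - u_\ell - \tilde{u} + \tilde{u}_\ell$ satisfies $\nu\|\Delta u\| \le \|(A - A_\ell)(u - \tilde{u})\|$. -/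

import Mathlib

theorem four_point_mixed_difference_bound
    {U : Type*} [NormedAddCommGroup U] [InnerProductSpace ℝ U]
    (ν : ℝ) (hν : 0 < ν)
    (A Aℓ : U →L[ℝ] U)
    (hsaA : ∀ x y : U, (inner ℝ (A x) y : ℝ) = inner ℝ x (A y))
    (hsaAℓ : ∀ x y : U, (inner ℝ (Aℓ x) y : ℝ) = inner ℝ x (Aℓ y))
    (hpsdA : ∀ x : U, 0 ≤ (inner ℝ (A x) x : ℝ))
    (hpsdAℓ : ∀ x : U, 0 ≤ (inner ℝ (Aℓ x) x : ℝ))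
    (b bℓ tb tbℓ : U)
    (u uℓ tu tuℓ : U)
    (hu : A u + ν • u = b)
    (huℓ : Aℓ uℓ + ν • uℓ = bℓ)
    (htu : A tu + ν • tu = tb)
    (htuℓ : Aℓ tuℓ + ν • tuℓ = tbℓ)
    (hdata : b - bℓ = tb - tbℓ) :
    ν * ‖u - uℓ - tu + tuℓ‖ ≤ ‖(A - Aℓ) (u - tu)‖ := by
  set Δ := u - uℓ - tu + tuℓ with hΔ
  have key : Aℓ Δ + ν • Δ = -((A - Aℓ) (u - tu)) := by
    simp only [hΔ, ContinuousLinearMap.sub_apply, map_sub, map_add]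
    linear_combination (norm := module) hu - huℓ - htu + htuℓ + hdata
  have h1 : ν * ‖Δ‖ ^ 2 ≤ (inner ℝ (Aℓ Δ + ν • Δ) Δ : ℝ) := by
    rw [inner_add_left, real_inner_smul_left, real_inner_self_eq_norm_sq]
    nlinarith [hpsdAℓ Δ]
  have h2 : (inner ℝ (Aℓ Δ + ν • Δ) Δ : ℝ) ≤ ‖(A - Aℓ) (u - tu)‖ * ‖Δ‖ := by
    rw [key]
    calc (inner ℝ (-((A - Aℓ) (u - tu))) Δ : ℝ) ≤ ‖-((A - Aℓ) (u - tu))‖ * ‖Δ‖ :=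
          real_inner_le_norm _ _
      _ = ‖(A - Aℓ) (u - tu)‖ * ‖Δ‖ := by rw [norm_neg]
  rcases eq_or_ne ‖Δ‖ 0 with h0 | h0
  · rw [h0, mul_zero]; positivity
  · have hpos : 0 < ‖Δ‖ := lt_of_le_of_ne (norm_nonneg _) (Ne.symm h0)
    have := le_trans h1 h2
    nlinarith
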